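/- Let X be a finite set of points in ℙ²_k in uniform position and X′ ⊆ X a subset with h¹(I_{X′}(l)) ≠ 0. Then h⁰(I_X(l)) = h⁰(I_{X′}(l)); in particular every curve of degree l containing X′ contains X. -/

import Mathlib

open MvPolynomial

/-- Evaluation of degree-`l` homogeneous forms on `ℙ²` (given by representatives in `k³`)
at the points of a finite set `X`. -/
noncomputable def evalMapP2 (k : Type) [Field k] (X : Finset (Fin 3 → k)) (l : ℕ) :
    (homogeneousSubmodule (Fin 3) k l) →ₗ[k] (X → k) where
  toFun f x := eval (x : Fin 3 → k) f.1
  map_add' f g := by funext x; simp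
  map_smul' c f := by funext x; simp

/-- The Hilbert function of a finite set of points of `ℙ²` (given by representatives in `k³`):
`H(X, l)` is the rank of the evaluation map `H⁰(𝒪_{ℙ²}(l)) → H⁰(𝒪_X(l)) = k^X`. -/
noncomputable def hilbertFunction (k : Type) [Field k] (X : Finset (Fin 3 → k)) (l : ℕ) : ℕ :=
  Module.finrank k (LinearMap.range (evalMapP2 k X l))

/-- `h⁰(ℙ², I_X(l))`: the dimension of the space of degree-`l` forms vanishing on `X`. -/
noncomputable def h0IdealSheaf (k : Type) [Field k] (X : Finset (Fin 3 → k)) (l : ℕ) : ℕ :=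
  Module.finrank k (LinearMap.ker (evalMapP2 k X l))

/-- `h¹(ℙ², I_X(l)) = deg X - H(X, l)`, from the exact sequence
`0 → H⁰(I_X(l)) → H⁰(𝒪(l)) → H⁰(𝒪_X(l)) → H¹(I_X(l)) → H¹(𝒪(l)) = 0`. -/
noncomputable def h1IdealSheaf (k : Type) [Field k] (X : Finset (Fin 3 → k)) (l : ℕ) : ℕ :=
  X.card - hilbertFunction k X l

/-- The representatives in `X ⊆ k³` give pairwise distinct points of `ℙ²`. -/
def ProjDistinct (k : Type) [Field k] (X : Finset (Fin 3 → k)) : Prop :=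
  (∀ x ∈ X, x ≠ 0) ∧ ∀ x ∈ X, ∀ y ∈ X, x ≠ y → ∀ c : k, x ≠ c • y

/-- `X` has the Uniform Position Property: any two subsets of the same cardinality
have the same Hilbert function. -/
def UniformPosition (k : Type) [Field k] (X : Finset (Fin 3 → k)) : Prop :=
  ∀ Z₁ Z₂ : Finset (Fin 3 → k), Z₁ ⊆ X → Z₂ ⊆ X → Z₁.card = Z₂.card →
    ∀ i, hilbertFunction k Z₁ i = hilbertFunction k Z₂ i

section Aux

open Finset

variable {k : Type} [Field k]

noncomputable instance : DecidableEq (Fin 3 → k) := Classical.decEq _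

set_option synthInstance.maxHeartbeats 1000000
set_option maxHeartbeats 1000000

/-- Restriction of functions along a subset inclusion. -/
noncomputable def resMapP2 {W V : Finset (Fin 3 → k)} (h : W ⊆ V) :
    (V → k) →ₗ[k] (W → k) :=
  LinearMap.funLeft k k (fun w => (⟨w.1, h w.2⟩ : V))

lemma evalMapP2_comp {W V : Finset (Fin 3 → k)} (h : W ⊆ V) (l : ℕ) :
    evalMapP2 k W l = (resMapP2 h).comp (evalMapP2 k V l) := rfl

lemma range_evalMapP2_eq {W V : Finset (Fin 3 → k)} (h : W ⊆ V) (l : ℕ) :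
    LinearMap.range (evalMapP2 k W l)
      = (LinearMap.range (evalMapP2 k V l)).map (resMapP2 h) := by
  rw [evalMapP2_comp h l, LinearMap.range_comp]

lemma hilbertFunction_le_card (Z : Finset (Fin 3 → k)) (l : ℕ) :
    hilbertFunction k Z l ≤ Z.card := by
  have h1 : hilbertFunction k Z l ≤ Module.finrank k (Z → k) :=
    Submodule.finrank_le _
  simpa [Module.finrank_pi] using h1

/-- If the Hilbert function is smaller than the cardinality, we can erase a point
without changing the Hilbert function. -/
lemma exists_erase_hilbert (Z : Finset (Fin 3 → k)) (l : ℕ)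
    (h : hilbertFunction k Z l < Z.card) :
    ∃ y ∈ Z, hilbertFunction k (Z.erase y) l = hilbertFunction k Z l := by
  classical
  set R := LinearMap.range (evalMapP2 k Z l) with hR
  have hnot : ∃ y : Z, Pi.single y (1 : k) ∉ R := by
    by_contra hall
    push_neg at hall
    have htop : R = ⊤ := by
      rw [eq_top_iff, ← (Pi.basisFun k Z).span_eq]
      refine Submodule.span_le.2 ?_
      rintro v ⟨i, rfl⟩
      simpa [Pi.basisFun_apply] using hall i
    have : hilbertFunction k Z l = Z.card := by
      rw [hilbertFunction, ← hR, htop, finrank_top, Module.finrank_pi]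
      simp
    omega
  obtain ⟨y, hy⟩ := hnot
  refine ⟨y.1, y.2, ?_⟩
  have hsub : Z.erase y.1 ⊆ Z := erase_subset _ _
  set g : R →ₗ[k] ((Z.erase y.1 : Finset (Fin 3 → k)) → k) :=
    (resMapP2 hsub).comp R.subtype with hg
  have hker : LinearMap.ker g = ⊥ := by
    rw [LinearMap.ker_eq_bot']
    intro v hv
    have hz : ∀ z : Z, z ≠ y → (v : Z → k) z = 0 := by
      intro z hzy
      have hz1 : z.1 ∈ Z.erase y.1 :=
        mem_erase.2 ⟨fun hc => hzy (Subtype.ext hc), z.2⟩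
      have := congrFun hv (⟨z.1, hz1⟩ : (Z.erase y.1 : Finset (Fin 3 → k)))
      simpa [hg, resMapP2, LinearMap.funLeft] using this
    have hrep : (v : Z → k) = (v : Z → k) y • (Pi.single y 1 : Z → k) := by
      funext z
      by_cases hzy : z = y
      · subst hzy; simp
      · simp [hz z hzy, Pi.single_eq_of_ne hzy]
    by_cases hvy : (v : Z → k) y = 0
    · refine Subtype.ext ?_
      rw [hrep, hvy, zero_smul]
      rfl
    · exfalso
      apply hy
      have h1 : ((v : Z → k) y)⁻¹ • (v : Z → k) ∈ R := R.smul_mem _ v.2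
      have h2 : ((v : Z → k) y)⁻¹ • (v : Z → k) = (Pi.single y 1 : Z → k) := by
        funext z
        by_cases hzy : z = y
        · subst hzy; simp [inv_mul_cancel₀ hvy]
        · simp [hz z hzy, Pi.single_eq_of_ne hzy]
      exact h2 ▸ h1
  have hrange : LinearMap.range g = LinearMap.range (evalMapP2 k (Z.erase y.1) l) := by
    rw [range_evalMapP2_eq hsub l, hg, LinearMap.range_comp, Submodule.range_subtype, hR]
  have := LinearMap.finrank_range_add_finrank_ker g
  rw [hker, finrank_bot, add_zero, hrange] at this
  exact this

/-- Adding a point where some form nonvanishing on it (but vanishing on `W`) exists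
strictly increases the Hilbert function. -/
lemma hilbertFunction_lt_insert (W : Finset (Fin 3 → k)) (l : ℕ)
    (f : MvPolynomial (Fin 3) k) (hf : f ∈ homogeneousSubmodule (Fin 3) k l)
    (x : Fin 3 → k) (hx : x ∉ W) (hW : ∀ w ∈ W, eval w f = 0) (hxf : eval x f ≠ 0) :
    hilbertFunction k W l < hilbertFunction k (insert x W) l := by
  classical
  have hsub : W ⊆ insert x W := subset_insert _ _
  set R := LinearMap.range (evalMapP2 k (insert x W) l) with hR
  set g : R →ₗ[k] (W → k) :=
    (resMapP2 hsub).comp R.subtype with hg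
  have hrange : LinearMap.range g = LinearMap.range (evalMapP2 k W l) := by
    rw [range_evalMapP2_eq hsub l, hg, LinearMap.range_comp, Submodule.range_subtype, hR]
  have hrn := LinearMap.finrank_range_add_finrank_ker g
  have hkpos : 0 < Module.finrank k (LinearMap.ker g) := by
    refine (Module.finrank_pos_iff_exists_ne_zero (R := k) (M := LinearMap.ker g)).mpr ?_
    refine ⟨⟨⟨evalMapP2 k (insert x W) l ⟨f, hf⟩, LinearMap.mem_range_self _ _⟩, ?_⟩, ?_⟩
    · funext w
      simpa [hg, resMapP2, LinearMap.funLeft, evalMapP2] using hW w.1 w.2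
    · intro hc
      have hc' := congrArg (fun z : LinearMap.ker g =>
        ((z : R) : { p // p ∈ insert x W } → k) ⟨x, Finset.mem_insert_self x W⟩) hc
      simp only [ZeroMemClass.coe_zero, Pi.zero_apply] at hc'
      exact hxf (by simpa [evalMapP2] using hc')
  calc hilbertFunction k W l = Module.finrank k (LinearMap.range g) := by
        rw [hilbertFunction, hrange]
    _ < Module.finrank k (LinearMap.range g) + Module.finrank k (LinearMap.ker g) := by omega
    _ = hilbertFunction k (insert x W) l := by rw [hrn, hilbertFunction]

end Aux

open MvPolynomial in
/-- If `X ⊆ ℙ²` is in uniform position and `X' ⊆ X` satisfies `h¹(I_{X'}(l)) ≠ 0`, then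
`h⁰(I_X(l)) = h⁰(I_{X'}(l))`; in particular every curve of degree `l` containing `X'`
contains `X`. -/
theorem stmt8 (k : Type) [Field k] [IsAlgClosed k] (X X' : Finset (Fin 3 → k))
    (hdist : ProjDistinct k X) (hupp : UniformPosition k X)
    (hsub : X' ⊆ X) (l : ℕ) (hone : h1IdealSheaf k X' l ≠ 0) :
    h0IdealSheaf k X l = h0IdealSheaf k X' l ∧
      ∀ f ∈ homogeneousSubmodule (Fin 3) k l,
        (∀ x ∈ X', eval x f = 0) → ∀ x ∈ X, eval x f = 0 := by
  classical
  have hlt : hilbertFunction k X' l < X'.card := by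
    rw [h1IdealSheaf] at hone
    omega
  have key : ∀ f ∈ homogeneousSubmodule (Fin 3) k l,
      (∀ x ∈ X', eval x f = 0) → ∀ x ∈ X, eval x f = 0 := by
    intro f hf hX' x hx
    by_contra hxf
    obtain ⟨y, hy, hye⟩ := exists_erase_hilbert X' l hlt
    have hxX' : x ∉ X' := fun h => hxf (hX' x h)
    have hWX' : X'.erase y ⊆ X' := Finset.erase_subset _ _
    have hxW : x ∉ X'.erase y := fun h => hxX' (hWX' h)
    have hypos : 0 < X'.card := Finset.card_pos.2 ⟨y, hy⟩
    have hcard : (insert x (X'.erase y)).card = X'.card := by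
      rw [Finset.card_insert_of_notMem hxW, Finset.card_erase_of_mem hy]
      omega
    have hins : insert x (X'.erase y) ⊆ X :=
      Finset.insert_subset hx (hWX'.trans hsub)
    have hupp' := hupp (insert x (X'.erase y)) X' hins hsub hcard l
    have hlt' := hilbertFunction_lt_insert (X'.erase y) l f hf x hxW
      (fun w hw => hX' w (hWX' hw)) hxf
    rw [hye, hupp'] at hlt'
    omega
  refine ⟨?_, key⟩
  have hker : LinearMap.ker (evalMapP2 k X l) = LinearMap.ker (evalMapP2 k X' l) := by
    ext f
    simp only [LinearMap.mem_ker]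
    constructor
    · intro h
      funext z
      have := congrFun h (⟨z.1, hsub z.2⟩ : X)
      simpa [evalMapP2] using this
    · intro h
      funext z
      have hvan : ∀ w ∈ X', eval w (f : MvPolynomial (Fin 3) k) = 0 := by
        intro w hw
        have := congrFun h (⟨w, hw⟩ : X')
        simpa [evalMapP2] using this
      exact key f.1 f.2 hvan z.1 z.2
  rw [h0IdealSheaf, h0IdealSheaf, hker]
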